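/- Let A be an n×n quaternion matrix, let k ≥ 1 be an integer, let D be a Drazin inverse of A with index k, and let Y be a Moore–Penrose inverse of A^{k+1}. Then the matrix S := Y·A^k satisfies S·A·S = S, (S·A)* = S·A, A^{k+1}·S = A^k, and R_l(S) = R_l(D); that is, (A^{k+1})† A^k is the left core-EP inverse of A. -/
import Mathlib


/-- `(A^{k+1})†·A^k` is the left core-EP inverse of a quaternion matrix `A`:
with `D` the Drazin inverse of `A` of index `k` and `Y` a Moore–Penrose inverse
of `A^{k+1}`, the matrix `S = Y·A^k` satisfies `S·A·S = S`, `(S·A)* = S·A`,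
`A^{k+1}·S = A^k`, and `R_l(S) = R_l(D)`. -/
theorem left_core_EP_inverse {n : ℕ} (k : ℕ) (hk : 1 ≤ k)
    (A D Y : Matrix (Fin n) (Fin n) (Quaternion ℝ))
    (hD1 : A * D = D * A) (hD2 : D * A * D = D) (hD3 : D * A ^ (k + 1) = A ^ k)
    (hY1 : A ^ (k + 1) * Y * A ^ (k + 1) = A ^ (k + 1))
    (hY2 : Y * A ^ (k + 1) * Y = Y)
    (hY3 : (A ^ (k + 1) * Y).conjTranspose = A ^ (k + 1) * Y)
    (hY4 : (Y * A ^ (k + 1)).conjTranspose = Y * A ^ (k + 1)) :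
    (Y * A ^ k) * A * (Y * A ^ k) = Y * A ^ k ∧
    ((Y * A ^ k) * A).conjTranspose = (Y * A ^ k) * A ∧
    A ^ (k + 1) * (Y * A ^ k) = A ^ k ∧
    {y : Fin n → Quaternion ℝ | ∃ x, Matrix.vecMul x (Y * A ^ k) = y} =
      {y : Fin n → Quaternion ℝ | ∃ x, Matrix.vecMul x D = y} := by
  have hc : Commute A D := hD1
  have hSA : Y * A ^ k * A = Y * A ^ (k + 1) := by rw [mul_assoc, ← pow_succ]
  -- D^j * A^(k+j) = A^k
  have f1 : ∀ j, D ^ j * A ^ (k + j) = A ^ k := by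
    intro j
    induction j with
    | zero => simp
    | succ j ih =>
      have e : k + (j + 1) = (k + 1) + j := by omega
      rw [e, pow_succ D, pow_add A, ← mul_assoc, mul_assoc (D ^ j), hD3,
        mul_assoc, ← pow_add, ih]
  -- D^(j+1) * A^j = D
  have f2 : ∀ j, D ^ (j + 1) * A ^ j = D := by
    intro j
    induction j with
    | zero => simp
    | succ j ih =>
      have hcm : (D * A) * A ^ j = A ^ j * (D * A) :=
        ((Commute.mul_left hc.symm (Commute.refl A)).pow_right j).eq
      calc D ^ (j + 1 + 1) * A ^ (j + 1)
          = D ^ (j + 1) * ((D * A) * A ^ j) := by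
            rw [pow_succ D (j + 1), pow_succ' A j]; simp only [mul_assoc]
        _ = D ^ (j + 1) * A ^ j * (D * A) := by rw [hcm, ← mul_assoc]
        _ = D * (A * D) := by rw [ih, ← hD1]
        _ = D := by rw [← mul_assoc]; exact hD2
  have hfac : A ^ (k + 1) * (A ^ (k - 1) * D ^ k) = A ^ k := by
    rw [← mul_assoc, ← pow_add, show k + 1 + (k - 1) = k + k from by omega,
      (hc.pow_pow (k + k) k).eq, f1 k]
  have h3 : A ^ (k + 1) * (Y * A ^ k) = A ^ k := by
    conv_lhs => rw [← hfac]
    rw [← mul_assoc, ← mul_assoc, hY1]; exact hfac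
  have hSfac : (Y * (A ^ (k + 1) * (A ^ (k - 1) * D ^ (k - 1)))) * D = Y * A ^ k := by
    simp only [mul_assoc]
    rw [← pow_succ, show k - 1 + 1 = k from by omega, hfac]
  have hDfac : (D ^ (k + 1) * A ^ (k + 1)) * (Y * A ^ k) = D := by
    rw [mul_assoc, h3, f2 k]
  refine ⟨?_, ?_, h3, ?_⟩
  · rw [hSA, ← mul_assoc, hY2]
  · rw [hSA]; exact hY4
  · ext y
    simp only [Set.mem_setOf_eq]
    constructor
    · rintro ⟨x, rfl⟩
      exact ⟨Matrix.vecMul x (Y * (A ^ (k + 1) * (A ^ (k - 1) * D ^ (k - 1)))),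
        by rw [Matrix.vecMul_vecMul, hSfac]⟩
    · rintro ⟨x, rfl⟩
      exact ⟨Matrix.vecMul x (D ^ (k + 1) * A ^ (k + 1)),
        by rw [Matrix.vecMul_vecMul, hDfac]⟩
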